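/- For any z in the upper half plane and any Y > 0, the number of cosets γ ∈ Γ_∞\Γ with Im(γ·z) ≥ 1/Y is O(1 + Y), with an absolute implied constant. -/

import Mathlib

open scoped UpperHalfPlane
open Matrix ModularGroup UpperHalfPlane Matrix.SpecialLinearGroup MatrixGroups

/-- The stabilizer of ∞ in PSL₂(ℤ), modelled in SL₂(ℤ) as the subgroup generated by
`T : z ↦ z + 1` and `-1`. -/
def GammaInf : Subgroup (Matrix.SpecialLinearGroup (Fin 2) ℤ) :=
  Subgroup.closure {ModularGroup.T, -1}

lemma T_zpow_mem (n : ℤ) : ModularGroup.T ^ n ∈ GammaInf :=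
  Subgroup.zpow_mem _ (Subgroup.subset_closure (Set.mem_insert _ _)) n

lemma neg_T_zpow_mem (n : ℤ) : -ModularGroup.T ^ n ∈ GammaInf := by
  have h : (-1 : SL(2,ℤ)) ∈ GammaInf :=
    Subgroup.subset_closure (Set.mem_insert_of_mem _ rfl)
  simpa [neg_one_mul] using GammaInf.mul_mem h (T_zpow_mem n)

lemma c_eq_zero_of_mem {g : SL(2,ℤ)} (hg : g ∈ GammaInf) : g 1 0 = 0 := by
  induction hg using Subgroup.closure_induction with
  | mem x hx => rcases hx with h | h <;> subst h <;> rfl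
  | one => rfl
  | mul a b _ _ ha hb => simp [SpecialLinearGroup.coe_mul, Matrix.mul_apply,
      Fin.sum_univ_succ, ha, hb]
  | inv a _ ha => rw [SL2_inv_expl]; simpa using ha

lemma eq_T_zpow_or_neg {g : SL(2,ℤ)} (hc : g 1 0 = 0) :
    ∃ n : ℤ, g = ModularGroup.T ^ n ∨ g = -ModularGroup.T ^ n := by
  have had := g.det_coe
  rw [det_fin_two, hc] at had
  replace had : g 0 0 * g 1 1 = 1 := by linarith
  rcases Int.eq_one_or_neg_one_of_mul_eq_one' had with (⟨ha, hd⟩ | ⟨ha, hd⟩)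
  · refine ⟨g 0 1, Or.inl ?_⟩
    ext i j; fin_cases i <;> fin_cases j <;>
      simp [ha, hc, hd, coe_T_zpow, show (1 : Fin (0 + 2)) = (1 : Fin 2) from rfl]
  · refine ⟨-(g 0 1), Or.inr ?_⟩
    ext i j; fin_cases i <;> fin_cases j <;>
      simp [ha, hc, hd, coe_T_zpow, show (1 : Fin (0 + 2)) = (1 : Fin 2) from rfl]

lemma mem_of_c_eq_zero {g : SL(2,ℤ)} (hc : g 1 0 = 0) : g ∈ GammaInf := by
  obtain ⟨n, h | h⟩ := eq_T_zpow_or_neg hc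
  · exact h ▸ T_zpow_mem n
  · exact h ▸ neg_T_zpow_mem n

lemma im_smul_eq_of_mem {h : SL(2,ℤ)} (hh : h ∈ GammaInf) (γ : SL(2,ℤ)) (z : ℍ) :
    ((h * γ) • z).im = (γ • z).im := by
  obtain ⟨n, rfl | rfl⟩ := eq_T_zpow_or_neg (c_eq_zero_of_mem hh)
  · rw [mul_smul, im_T_zpow_smul]
  · rw [neg_mul, SL_neg_smul, mul_smul, im_T_zpow_smul]

lemma row_mem_of_row_eq {γ₁ γ₂ : SL(2,ℤ)} (h0 : γ₁ 1 0 = γ₂ 1 0) (h1 : γ₁ 1 1 = γ₂ 1 1) :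
    γ₂ * γ₁⁻¹ ∈ GammaInf := by
  apply mem_of_c_eq_zero
  have hdet := γ₁.det_coe
  rw [det_fin_two] at hdet
  rw [SL2_inv_expl]
  erw [Matrix.SpecialLinearGroup.coe_mul, Matrix.mul_apply]
  simp only [SpecialLinearGroup.coe_mul, Matrix.mul_apply, Fin.sum_univ_succ,
    Finset.sum_empty, Fin.isValue]
  simp [h0, h1]
  ring

/-- The imaginary part of `γ • z`, as a function of the coset `Γ_∞ γ`. -/
noncomputable def imCoset (z : ℍ) :
    Quotient (QuotientGroup.rightRel GammaInf) → ℝ :=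
  Quotient.lift (fun γ : SL(2,ℤ) => (γ • z).im) (by
    intro a b hab
    have hab' : b * a⁻¹ ∈ GammaInf := QuotientGroup.rightRel_apply.mp hab
    have := im_smul_eq_of_mem hab' a z
    simpa [inv_mul_cancel_right] using this.symm)

lemma imCoset_out (z : ℍ) (q : Quotient (QuotientGroup.rightRel GammaInf)) :
    ((Quotient.out q) • z).im = imCoset z q := by
  conv_rhs => rw [← Quotient.out_eq q]
  rfl

lemma card_Icc_le_real (a b : ℤ) {r : ℝ} (hr : 0 ≤ r) (h : (b:ℝ) + 1 - a ≤ r) :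
    ((Finset.Icc a b).card : ℝ) ≤ r := by
  rw [Int.card_Icc]
  rcases le_or_gt (b + 1 - a) 0 with h0 | h0
  · simp [Int.toNat_of_nonpos h0, hr]
  · rw [show ((b + 1 - a).toNat : ℝ) = (((b + 1 - a).toNat : ℤ) : ℝ) by push_cast; ring,
      Int.toNat_of_nonneg h0.le]
    push_cast; linarith

lemma sqrt_le_one_add (Y : ℝ) (hY : 0 ≤ Y) : Real.sqrt (2 * Y) ≤ 1 + Y := by
  rw [show (1 + Y) = Real.sqrt ((1 + Y)^2) from (Real.sqrt_sq (by positivity)).symm]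
  exact Real.sqrt_le_sqrt (by nlinarith)

lemma lattice_count (x y Y : ℝ) (hy : 1/2 ≤ y) (hY : 0 < Y) :
    ∃ F : Finset (ℤ × ℤ), (F.card : ℝ) ≤ 3 + 8 * Y ∧
      {p : ℤ × ℤ | ((p.1:ℝ) * x + (p.2:ℝ))^2 + (p.1:ℝ)^2 * y^2 ≤ Y * y ∧
        (p.1 = 0 → p.2 = 1 ∨ p.2 = -1)} ⊆ ↑F := by
  have hy0 : 0 < y := by linarith
  rcases le_or_gt y Y with hcase | hcase
  · -- y ≤ Y
    set s : ℝ := Real.sqrt (Y * y) with hs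
    have hs0 : 0 ≤ s := Real.sqrt_nonneg _
    set A : ℤ := ⌊Real.sqrt (Y / y)⌋ with hA
    have hA0 : 0 ≤ A := Int.floor_nonneg.2 (Real.sqrt_nonneg _)
    refine ⟨(Finset.Icc (-A) A).biUnion
      (fun c => ({c} ×ˢ Finset.Icc ⌈-(c:ℝ) * x - s⌉ ⌊-(c:ℝ) * x + s⌋)), ?_, ?_⟩
    · -- card bound
      have h1 : ((Finset.Icc (-A) A).card : ℝ) ≤ 2 * Real.sqrt (Y / y) + 1 := by
        apply card_Icc_le_real _ _ (by positivity)
        push_cast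
        have := Int.floor_le (Real.sqrt (Y / y))
        linarith
      have h2 : ∀ c : ℤ, ((({c} ×ˢ Finset.Icc ⌈-(c:ℝ) * x - s⌉ ⌊-(c:ℝ) * x + s⌋).card : ℝ))
          ≤ 2 * s + 1 := by
        intro c
        rw [Finset.card_product, Finset.card_singleton, one_mul]
        apply card_Icc_le_real _ _ (by positivity)
        have h3 := Int.floor_le (-(c:ℝ) * x + s)
        have h4 := Int.le_ceil (-(c:ℝ) * x - s)
        linarith
      have hbound : ((( (Finset.Icc (-A) A).biUnion
          (fun c => ({c} ×ˢ Finset.Icc ⌈-(c:ℝ) * x - s⌉ ⌊-(c:ℝ) * x + s⌋))).card : ℝ))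
          ≤ (2 * Real.sqrt (Y / y) + 1) * (2 * s + 1) := by
        calc ((( (Finset.Icc (-A) A).biUnion _).card : ℝ))
            ≤ ((∑ c ∈ Finset.Icc (-A) A,
                ({c} ×ˢ Finset.Icc ⌈-(c:ℝ) * x - s⌉ ⌊-(c:ℝ) * x + s⌋).card : ℕ) : ℝ) := by
              exact_mod_cast Nat.cast_le.2 (Finset.card_biUnion_le)
          _ = ∑ c ∈ Finset.Icc (-A) A,
                ((({c} ×ˢ Finset.Icc ⌈-(c:ℝ) * x - s⌉ ⌊-(c:ℝ) * x + s⌋).card : ℝ)) := by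
              push_cast; rfl
          _ ≤ ∑ c ∈ Finset.Icc (-A) A, (2 * s + 1) :=
              Finset.sum_le_sum (fun c _ => h2 c)
          _ = ((Finset.Icc (-A) A).card : ℝ) * (2 * s + 1) := by
              rw [Finset.sum_const, nsmul_eq_mul]
          _ ≤ (2 * Real.sqrt (Y / y) + 1) * (2 * s + 1) := by
              apply mul_le_mul_of_nonneg_right h1 (by positivity)
      refine hbound.trans ?_
      have hss : Real.sqrt (Y / y) * s = Y := by
        rw [hs, ← Real.sqrt_mul (by positivity)]
        rw [show Y / y * (Y * y) = Y^2 by field_simp]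
        exact Real.sqrt_sq hY.le
      have hsY : s ≤ Y := by
        have h5 : s ≤ Real.sqrt (Y^2) := Real.sqrt_le_sqrt (by nlinarith)
        rwa [Real.sqrt_sq hY.le] at h5
      have hsq : Real.sqrt (Y / y) ≤ 1 + Y := by
        refine le_trans ?_ (sqrt_le_one_add Y hY.le)
        exact Real.sqrt_le_sqrt (by rw [div_le_iff₀ hy0]; nlinarith)
      nlinarith [Real.sqrt_nonneg (Y / y), hs0]
    · -- subset
      rintro ⟨c, d⟩ ⟨h1, _⟩
      simp only [Finset.coe_biUnion, Set.mem_iUnion, Finset.mem_coe, Finset.mem_biUnion,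
        Finset.mem_Icc, Finset.mem_product, Finset.mem_singleton]
      refine ⟨c, ?_, rfl, ?_, ?_⟩
      · have hc2 : (c:ℝ)^2 ≤ Y / y := by
          rw [le_div_iff₀ hy0]
          nlinarith [sq_nonneg ((c:ℝ) * x + d)]
        have habs : |(c:ℝ)| ≤ Real.sqrt (Y / y) := by
          rw [← Real.sqrt_sq_eq_abs]
          exact Real.sqrt_le_sqrt hc2
        rw [abs_le] at habs
        constructor
        · have h6 : (-c : ℤ) ≤ A := Int.le_floor.2 (by push_cast; linarith [habs.1])
          linarith
        · exact Int.le_floor.2 habs.2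
      · rw [Int.ceil_le]
        have hd : |(c:ℝ) * x + d| ≤ s := by
          rw [← Real.sqrt_sq_eq_abs]
          exact Real.sqrt_le_sqrt (by nlinarith [sq_nonneg ((c:ℝ)*y)])
        rw [abs_le] at hd
        linarith [hd.1]
      · rw [Int.le_floor]
        have hd : |(c:ℝ) * x + d| ≤ s := by
          rw [← Real.sqrt_sq_eq_abs]
          exact Real.sqrt_le_sqrt (by nlinarith [sq_nonneg ((c:ℝ)*y)])
        rw [abs_le] at hd
        linarith [hd.2]
  · -- Y < y : only c = 0 possible
    refine ⟨{(0,1), (0,-1)}, ?_, ?_⟩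
    · have : (({((0:ℤ),(1:ℤ)), ((0:ℤ),(-1:ℤ))} : Finset (ℤ × ℤ)).card : ℝ) ≤ 2 := by
        exact_mod_cast Finset.card_insert_le _ _ |>.trans (by simp)
      linarith
    · rintro ⟨c, d⟩ ⟨h1, h2⟩
      have hc : c = 0 := by
        by_contra hc
        have : (1:ℝ) ≤ (c:ℝ)^2 := by
          have h7 : (1:ℤ) ≤ c^2 := by rcases lt_or_gt_of_ne hc with h | h <;> nlinarith
          exact_mod_cast h7
        nlinarith [sq_nonneg ((c:ℝ) * x + d)]
      rcases h2 hc with h | h <;> subst hc <;> subst h <;> simp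

lemma aux_main (w : ℍ) (hw : 1/2 ≤ w.im) (Y : ℝ) (hY : 0 < Y) :
    {q : Quotient (QuotientGroup.rightRel GammaInf) | 1/Y ≤ imCoset w q}.Finite ∧
    (Nat.card {q : Quotient (QuotientGroup.rightRel GammaInf) // 1/Y ≤ imCoset w q} : ℝ)
      ≤ 8 * (1 + Y) := by
  obtain ⟨F, hFcard, hFsub⟩ := lattice_count w.re w.im Y hw hY
  set L : Set (ℤ × ℤ) := {p : ℤ × ℤ | ((p.1:ℝ) * w.re + (p.2:ℝ))^2 +
      (p.1:ℝ)^2 * w.im^2 ≤ Y * w.im ∧ (p.1 = 0 → p.2 = 1 ∨ p.2 = -1)} with hLdef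
  have hLfin : L.Finite := Set.Finite.subset F.finite_toSet hFsub
  have hmap : ∀ q : {q : Quotient (QuotientGroup.rightRel GammaInf) // 1/Y ≤ imCoset w q},
      ((Quotient.out q.1 1 0, Quotient.out q.1 1 1) : ℤ × ℤ) ∈ L := by
    rintro ⟨q, hq⟩
    set γ := Quotient.out q with hγ
    rw [← imCoset_out w q] at hq
    have hnorm : Complex.normSq (denom γ w) =
        ((γ 1 0 : ℝ) * w.re + (γ 1 1 : ℝ))^2 + (γ 1 0 : ℝ)^2 * w.im^2 := by
      rw [denom_apply]
      simp [Complex.normSq_apply, Complex.add_re, Complex.add_im, Complex.mul_re,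
        Complex.mul_im, coe_re, coe_im]
      ring
    have hpos : 0 < Complex.normSq (denom γ w) := normSq_denom_pos _ w.im_ne_zero
    rw [ModularGroup.im_smul_eq_div_normSq] at hq
    constructor
    · rw [← hnorm]
      rw [div_le_div_iff₀ hY hpos] at hq
      linarith
    · intro hc0
      replace hc0 : γ 1 0 = 0 := hc0
      show γ 1 1 = 1 ∨ γ 1 1 = -1
      have hdet := γ.det_coe
      rw [det_fin_two, hc0] at hdet
      replace hdet : γ 0 0 * γ 1 1 = 1 := by linarith
      rcases Int.eq_one_or_neg_one_of_mul_eq_one' hdet with (⟨_, hd⟩ | ⟨_, hd⟩)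
      · exact Or.inl hd
      · exact Or.inr hd
  have hinj : Function.Injective (fun q : {q : Quotient (QuotientGroup.rightRel GammaInf) //
        1/Y ≤ imCoset w q} =>
      (⟨(Quotient.out q.1 1 0, Quotient.out q.1 1 1), hmap q⟩ : L)) := by
    intro q q' h
    simp only [Subtype.mk.injEq, Prod.mk.injEq] at h
    have hmem := row_mem_of_row_eq h.1 h.2
    have heq : q.1 = q'.1 := by
      rw [← Quotient.out_eq q.1, ← Quotient.out_eq q'.1]
      exact Quotient.sound (QuotientGroup.rightRel_apply.mpr hmem)
    exact Subtype.ext heq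
  have hLsub : Finite L := hLfin.to_subtype
  have hfinsub : Finite {q : Quotient (QuotientGroup.rightRel GammaInf) //
      1/Y ≤ imCoset w q} := Finite.of_injective _ hinj
  refine ⟨Set.finite_coe_iff.mp hfinsub, ?_⟩
  have h1 : Nat.card {q : Quotient (QuotientGroup.rightRel GammaInf) //
      1/Y ≤ imCoset w q} ≤ Nat.card L := Nat.card_le_card_of_injective _ hinj
  have h2 : Nat.card L ≤ F.card := by
    rw [Nat.card_coe_set_eq]
    calc L.ncard ≤ (↑F : Set (ℤ × ℤ)).ncard := Set.ncard_le_ncard hFsub F.finite_toSet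
      _ = F.card := Set.ncard_coe_finset F
  have : (Nat.card {q : Quotient (QuotientGroup.rightRel GammaInf) //
      1/Y ≤ imCoset w q} : ℝ) ≤ (F.card : ℝ) := by exact_mod_cast h1.trans h2
  linarith

/-- For any `z ∈ ℍ` and `Y > 0`, the number of cosets `γ ∈ Γ_∞\Γ` with
`Im(γ·z) ≥ 1/Y` is `O(1 + Y)`, with an absolute implied constant. -/
theorem card_cosets_im_ge :
    ∃ C : ℝ, ∀ z : ℍ, ∀ Y : ℝ, 0 < Y →
      {q : Quotient (QuotientGroup.rightRel GammaInf) |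
        1/Y ≤ UpperHalfPlane.im ((Quotient.out q) • z)}.Finite ∧
      (Nat.card {q : Quotient (QuotientGroup.rightRel GammaInf) //
        1/Y ≤ UpperHalfPlane.im ((Quotient.out q) • z)} : ℝ) ≤ C * (1 + Y) := by
  
  refine ⟨8, fun z Y hY => ?_⟩
  obtain ⟨g, hg⟩ := ModularGroup.exists_smul_mem_fd z
  set w : ℍ := g • z with hwdef
  have hw : 1/2 ≤ w.im := by
    have h1 : 1 ≤ Complex.normSq (w : ℂ) := hg.1
    have h2 : |w.re| ≤ 1/2 := hg.2
    rw [Complex.normSq_apply, coe_re, coe_im] at h1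
    rw [abs_le] at h2
    nlinarith [w.im_pos]
  -- the equivalence of quotients by right multiplication by g⁻¹
  have hrel : ∀ a b : SL(2,ℤ), (QuotientGroup.rightRel GammaInf) a b ↔
      (QuotientGroup.rightRel GammaInf) (a * g⁻¹) (b * g⁻¹) := by
    intro a b
    rw [QuotientGroup.rightRel_apply, QuotientGroup.rightRel_apply]
    rw [show b * g⁻¹ * (a * g⁻¹)⁻¹ = b * a⁻¹ by group]
  set e : Quotient (QuotientGroup.rightRel GammaInf) ≃
      Quotient (QuotientGroup.rightRel GammaInf) :=
    Quotient.congr (Equiv.mulRight g⁻¹) hrel with hedef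
  have hkey : ∀ q, imCoset z q = imCoset w (e q) := by
    refine Quotient.ind (fun γ => ?_)
    show (γ • z).im = imCoset w (e ⟦γ⟧)
    have he : e ⟦γ⟧ = ⟦γ * g⁻¹⟧ := rfl
    rw [he]
    show (γ • z).im = ((γ * g⁻¹) • w).im
    rw [hwdef, ← mul_smul, inv_mul_cancel_right]
  obtain ⟨hfin, hcard⟩ := aux_main w hw Y hY
  have hseteq : {q : Quotient (QuotientGroup.rightRel GammaInf) |
      1/Y ≤ UpperHalfPlane.im ((Quotient.out q) • z)} =
      e ⁻¹' {q | 1/Y ≤ imCoset w q} := by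
    ext q
    simp only [Set.mem_setOf_eq, Set.mem_preimage]
    rw [imCoset_out z q, hkey q]
  constructor
  · rw [hseteq]
    exact Set.Finite.preimage (e.injective.injOn) hfin
  · refine le_trans ?_ hcard
    have : Nat.card {q : Quotient (QuotientGroup.rightRel GammaInf) //
        1/Y ≤ UpperHalfPlane.im ((Quotient.out q) • z)} =
        Nat.card {q : Quotient (QuotientGroup.rightRel GammaInf) // 1/Y ≤ imCoset w q} := by
      apply Nat.card_congr
      refine (e.subtypeEquiv fun q => ?_)
      rw [imCoset_out z q, hkey q]
    rw [this]
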